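/- Every standard nonexpansive simple, properly ordered Bratteli-Vershik system is nonexpansive. -/

import Mathlib

set_option autoImplicit false

/-- An ordered Bratteli diagram: finite nonempty vertex sets `V n`, a single root
vertex at level `0`, finite edge sets `E n` (edges from level `n` to level `n+1`,
multiple edges allowed), every vertex has an outgoing edge, every non-root vertex
an incoming edge, and the edges into each vertex carry a linear order, encoded by
the relation `elt` which relates only edges with the same target. -/
structure BDiagram where
  V : ℕ → Type
  E : ℕ → Type
  fintV : ∀ n, Fintype (V n)
  fintE : ∀ n, Fintype (E n)
  nonV : ∀ n, Nonempty (V n)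
  rootSubsingleton : Subsingleton (V 0)
  src : ∀ {n}, E n → V n
  tgt : ∀ {n}, E n → V (n + 1)
  hasOut : ∀ (n : ℕ) (v : V n), ∃ e : E n, src e = v
  hasIn : ∀ (n : ℕ) (v : V (n + 1)), ∃ e : E n, tgt e = v
  elt : ∀ {n}, E n → E n → Prop
  elt_tgt : ∀ (n : ℕ) (e f : E n), elt e f → tgt e = tgt f
  elt_irrefl : ∀ (n : ℕ) (e : E n), ¬ elt e e
  elt_trans : ∀ (n : ℕ) (e f g : E n), elt e f → elt f g → elt e g
  elt_total : ∀ (n : ℕ) (e f : E n), tgt e = tgt f → e ≠ f → elt e f ∨ elt f e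

namespace BDiagram

variable (B : BDiagram)

def castV {m n : ℕ} (h : m = n) (v : B.V m) : B.V n := h ▸ v

/-- An edge is minimal if no edge (into the same target) is below it. -/
def IsMinEdge {n : ℕ} (e : B.E n) : Prop := ∀ e' : B.E n, ¬ B.elt e' e

/-- An edge is maximal if no edge (into the same target) is above it. -/
def IsMaxEdge {n : ℕ} (e : B.E n) : Prop := ∀ e' : B.E n, ¬ B.elt e e'

/-- The space of infinite paths from the root. -/
def PathSpace : Type := { x : ∀ n, B.E n // ∀ n, B.tgt (x n) = B.src (x (n + 1)) }

def IsMinPath (x : B.PathSpace) : Prop := ∀ n, B.IsMinEdge (x.1 n)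

def IsMaxPath (x : B.PathSpace) : Prop := ∀ n, B.IsMaxEdge (x.1 n)

/-- Properly ordered: unique minimal and unique maximal path. -/
def ProperlyOrdered : Prop :=
  (∃! x : B.PathSpace, B.IsMinPath x) ∧ (∃! x : B.PathSpace, B.IsMaxPath x)

/-- The partial order on cofinal paths: `x < y` iff they eventually agree and at the
last disagreement the edge of `x` is below the edge of `y`. -/
def pathLT (x y : B.PathSpace) : Prop :=
  ∃ N : ℕ, B.elt (x.1 N) (y.1 N) ∧ ∀ n : ℕ, N < n → x.1 n = y.1 n

/-- `T` is the Vershik map: each non-maximal path goes to its successor, and each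
maximal path goes to a minimal path. -/
def IsVershik (T : B.PathSpace ≃ B.PathSpace) : Prop :=
  (∀ x : B.PathSpace, ¬ B.IsMaxPath x →
    B.pathLT x (T x) ∧ ∀ z : B.PathSpace, B.pathLT x z → ¬ B.pathLT z (T x)) ∧
  (∀ x : B.PathSpace, B.IsMaxPath x → B.IsMinPath (T x))

/-- `f` is a chain of consecutive edges on levels `[a, b)`. -/
def SegOn (f : ∀ i, B.E i) (a b : ℕ) : Prop :=
  ∀ i : ℕ, a ≤ i → i + 1 < b → B.tgt (f i) = B.src (f (i + 1))

/-- Simplicity: some telescoping has complete connections between adjacent levels. -/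
def Simple : Prop :=
  ∃ ns : ℕ → ℕ, StrictMono ns ∧ ns 0 = 0 ∧
    ∀ (l c : ℕ), ns (l + 1) = c + 1 →
      ∀ (v : B.V (ns l)) (w : B.V (c + 1)),
        ∃ f : ∀ i, B.E i, B.SegOn f (ns l) (c + 1) ∧ B.src (f (ns l)) = v ∧ B.tgt (f c) = w

/-- The natural (Cantor) topology on the path space, induced from the product of
the discrete topologies on the edge sets. -/
def pathTop : TopologicalSpace B.PathSpace :=
  TopologicalSpace.induced Subtype.val (@Pi.topologicalSpace ℕ B.E (fun _ => ⊥))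

/-- Integer iterates of a bijection of the path space. -/
def iterZ (T : B.PathSpace ≃ B.PathSpace) (m : ℤ) : B.PathSpace ≃ B.PathSpace :=
  (T : Equiv.Perm B.PathSpace) ^ m

/-- Two paths have the same `k`-coding: for every time `m` the initial segments of
`T^m x` and `T^m y` from the root to level `k` coincide. -/
def SameCoding (T : B.PathSpace ≃ B.PathSpace) (k : ℕ) (x y : B.PathSpace) : Prop :=
  ∀ (m : ℤ) (i : ℕ), i < k → ((B.iterZ T m) x).1 i = ((B.iterZ T m) y).1 i

/-- A depth `k` pair: distinct paths with the same `k`-coding but not the same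
`(k+1)`-coding. -/
def DepthPair (T : B.PathSpace ≃ B.PathSpace) (k : ℕ) (x y : B.PathSpace) : Prop :=
  x ≠ y ∧ B.SameCoding T k x y ∧ ¬ B.SameCoding T (k + 1) x y

/-- The pair `x, y` has a `j` cut: for some time `m`, both `T^m x` and `T^m y` are
minimal from the root into level `j`. -/
def HasCut (T : B.PathSpace ≃ B.PathSpace) (j : ℕ) (x y : B.PathSpace) : Prop :=
  ∃ m : ℤ, (∀ i : ℕ, i < j → B.IsMinEdge (((B.iterZ T m) x).1 i)) ∧
    (∀ i : ℕ, i < j → B.IsMinEdge (((B.iterZ T m) y).1 i))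

/-- Nonexpansive: for every `k ≥ 1` there are two distinct paths with the same
`k`-coding. -/
def Nonexpansive (T : B.PathSpace ≃ B.PathSpace) : Prop :=
  ∀ k : ℕ, 1 ≤ k → ∃ x y : B.PathSpace, x ≠ y ∧ B.SameCoding T k x y

/-- Well timed: for every `k ≥ 1` and every `j > k` there is a depth `k` pair with
a `j` cut. -/
def WellTimed (T : B.PathSpace ≃ B.PathSpace) : Prop :=
  ∀ k : ℕ, 1 ≤ k → ∀ j : ℕ, k < j →
    ∃ x y : B.PathSpace, B.DepthPair T k x y ∧ B.HasCut T j x y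

/-- Very well timed: for every `k ≥ 1` there is a depth `k` pair having a `j` cut
for every `j > k`. -/
def VeryWellTimed (T : B.PathSpace ≃ B.PathSpace) : Prop :=
  ∀ k : ℕ, 1 ≤ k →
    ∃ x y : B.PathSpace, B.DepthPair T k x y ∧ ∀ j : ℕ, k < j → B.HasCut T j x y

/-- Weakly well timed: for infinitely many `k ≥ 1`, for every `j > k` there is a
depth `k` pair with a `j` cut. -/
def WeaklyWellTimed (T : B.PathSpace ≃ B.PathSpace) : Prop :=
  ∀ K : ℕ, ∃ k : ℕ, K ≤ k ∧ 1 ≤ k ∧ ∀ j : ℕ, k < j →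
    ∃ x y : B.PathSpace, B.DepthPair T k x y ∧ B.HasCut T j x y

/-- Untimed: for every `k ≥ 1` there is a `j > k` such that no depth `k` pair has a
`j` cut. -/
def Untimed (T : B.PathSpace ≃ B.PathSpace) : Prop :=
  ∀ k : ℕ, 1 ≤ k → ∃ j : ℕ, k < j ∧
    ∀ x y : B.PathSpace, B.DepthPair T k x y → ¬ B.HasCut T j x y

/-- Very untimed: for every `k ≥ 1`, no depth `k` pair has a `(k+1)` cut. -/
def VeryUntimed (T : B.PathSpace ≃ B.PathSpace) : Prop :=
  ∀ k : ℕ, 1 ≤ k →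
    ∀ x y : B.PathSpace, B.DepthPair T k x y → ¬ B.HasCut T (k + 1) x y

/-- Finite paths from the root to level `n`. -/
def FinPath (n : ℕ) : Type :=
  { f : (i : Fin n) → B.E i.val //
    ∀ (i : ℕ) (h : i + 1 < n), B.tgt (f ⟨i, by omega⟩) = B.src (f ⟨i + 1, h⟩) }

/-- The lexicographic (from the end) order on finite paths to level `n` induced by
the orders on the edges. -/
def finLT {n : ℕ} (p q : B.FinPath n) : Prop :=
  ∃ (N : ℕ) (h : N < n), B.elt (p.1 ⟨N, h⟩) (q.1 ⟨N, h⟩) ∧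
    ∀ (i : ℕ) (hi : i < n), N < i → p.1 ⟨i, hi⟩ = q.1 ⟨i, hi⟩

/-- The finite path `p` to level `n` ends at the vertex `v`. -/
def EndsAt {n : ℕ} (p : B.FinPath n) (v : B.V n) : Prop :=
  ∀ (m : ℕ) (h : n = m + 1), B.tgt (p.1 ⟨m, by omega⟩) = B.castV h v

/-- The initial segment of an infinite path, from the root to level `n`. -/
def pathInit (x : B.PathSpace) (n : ℕ) : B.FinPath n :=
  ⟨fun i => x.1 i.val, fun i _ => x.2 i⟩

/-- The vertex of an infinite path at level `n`. -/
def pathVert (x : B.PathSpace) (n : ℕ) : B.V n := B.src (x.1 n)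

theorem pathInit_endsAt (x : B.PathSpace) (n : ℕ) :
    B.EndsAt (B.pathInit x n) (B.pathVert x n) := by
  intro m h
  subst h
  exact x.2 m

/-- Truncation of a finite path to a lower level. -/
def truncTo {n : ℕ} (k : ℕ) (hk : k ≤ n) (p : B.FinPath n) : B.FinPath k :=
  ⟨fun i => p.1 ⟨i.val, by omega⟩, fun i h => p.2 i (by omega)⟩

/-- Paths `x, x'` are `k`-equivalent at level `n`: there is an order isomorphism
between the sets of finite paths from the root into their level-`n` vertices which
preserves truncations to level `k` (equality of `k`-basic blocks) and which matches
the initial segment of `x` with the initial segment of `x'` (the "dot" is in the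
same place). -/
def KEquivAt (k n : ℕ) (x x' : B.PathSpace) : Prop :=
  ∃ φ : { p : B.FinPath n // B.EndsAt p (B.pathVert x n) } ≃
      { p : B.FinPath n // B.EndsAt p (B.pathVert x' n) },
    (∀ p q, B.finLT p.1 q.1 ↔ B.finLT (φ p).1 (φ q).1) ∧
    (∀ p (i : ℕ) (hik : i < k) (hin : i < n), ((φ p).1).1 ⟨i, hin⟩ = (p.1).1 ⟨i, hin⟩) ∧
    φ ⟨B.pathInit x n, B.pathInit_endsAt x n⟩ = ⟨B.pathInit x' n, B.pathInit_endsAt x' n⟩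

/-- Paths are `k`-equivalent: they agree from the root to level `k` and are
`k`-equivalent at every level `n > k`. -/
def KEquivPaths (k : ℕ) (x x' : B.PathSpace) : Prop :=
  (∀ i : ℕ, i < k → x.1 i = x'.1 i) ∧ ∀ n : ℕ, k < n → B.KEquivAt k n x x'

/-- Standard nonexpansive: for every `k ≥ 1` there is a pair of distinct
`k`-equivalent paths. -/
def SNE : Prop := ∀ k : ℕ, 1 ≤ k → ∃ x x' : B.PathSpace, x ≠ x' ∧ B.KEquivPaths k x x'

/-!  ### Telescoping  -/

theorem castV_eq_of_heq {m n : ℕ} (h : m = n) {v : B.V m} {w : B.V n} (hw : HEq v w) :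
    B.castV h v = w := by
  subst h
  exact eq_of_heq hw

theorem castV_heq {m n : ℕ} (h : m = n) (v : B.V m) : HEq (B.castV h v) v := by
  subst h
  rfl

theorem castV_inj {m n : ℕ} (h : m = n) {v w : B.V m}
    (hvw : B.castV h v = B.castV h w) : v = w := by
  subst h
  exact hvw

def castE {m n : ℕ} (h : m = n) (e : B.E m) : B.E n := h ▸ e

noncomputable def chainFrom (a : ℕ) (v : B.V a) : (i : ℕ) → B.E (a + i)
  | 0 => (B.hasOut a v).choose
  | i + 1 => (B.hasOut (a + i + 1) (B.tgt (chainFrom a v i))).choose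

theorem chainFrom_src_zero (a : ℕ) (v : B.V a) : B.src (B.chainFrom a v 0) = v :=
  (B.hasOut a v).choose_spec

theorem chainFrom_src_succ (a : ℕ) (v : B.V a) (i : ℕ) :
    B.src (B.chainFrom a v (i + 1)) = B.tgt (B.chainFrom a v i) :=
  (B.hasOut (a + i + 1) (B.tgt (B.chainFrom a v i))).choose_spec

noncomputable def chainTo (a : ℕ) : (j : ℕ) → (w : B.V (a + j + 1)) → (i : ℕ) → i ≤ j → B.E (a + i)
  | 0, w, i, _ => B.castE (by omega : a + 0 = a + i) (B.hasIn a w).choose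
  | j + 1, w, i, _ =>
      if h : i ≤ j then chainTo a j (B.src (B.hasIn (a + j + 1) w).choose) i h
      else B.castE (by omega : a + (j + 1) = a + i) (B.hasIn (a + j + 1) w).choose

theorem chainTo_tgt_last (a : ℕ) : ∀ (j : ℕ) (w : B.V (a + j + 1)),
    B.tgt (B.chainTo a j w j le_rfl) = w := by
  intro j w
  cases j with
  | zero =>
      simp only [chainTo]
      exact (B.hasIn a w).choose_spec
  | succ j =>
      simp only [chainTo]
      rw [dif_neg (by omega : ¬ j + 1 ≤ j)]
      exact (B.hasIn (a + j + 1) w).choose_spec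

theorem chainTo_chain (a : ℕ) : ∀ (j : ℕ) (w : B.V (a + j + 1)) (i : ℕ) (h : i + 1 ≤ j)
    (h' : i ≤ j), B.tgt (B.chainTo a j w i h') = B.src (B.chainTo a j w (i + 1) h) := by
  intro j
  induction j with
  | zero => intro w i h h'; omega
  | succ j ih =>
      intro w i h h'
      by_cases hij : i + 1 ≤ j
      · simp only [chainTo]
        rw [dif_pos (by omega : i ≤ j), dif_pos hij]
        exact ih _ i hij (by omega)
      · have hi : i = j := by omega
        subst hi
        simp only [chainTo]
        rw [dif_pos (le_refl i), dif_neg (by omega : ¬ i + 1 ≤ i)]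
        exact B.chainTo_tgt_last a i _


def TelE (a b : ℕ) : Type :=
  { f : (i : Fin (b - a)) → B.E (a + i.val) //
    ∀ (i : ℕ) (h : i + 1 < b - a), B.tgt (f ⟨i, by omega⟩) = B.src (f ⟨i + 1, h⟩) }

def telSrc {a b : ℕ} (hab : a < b) (f : B.TelE a b) : B.V a :=
  B.src (f.1 ⟨0, by omega⟩)

def telTgt {a b : ℕ} (hab : a < b) (f : B.TelE a b) : B.V b :=
  B.castV (by omega : a + (b - a - 1) + 1 = b) (B.tgt (f.1 ⟨b - a - 1, by omega⟩))

def telLT {a b : ℕ} (f g : B.TelE a b) : Prop :=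
  ∃ (N : ℕ) (h : N < b - a), B.elt (f.1 ⟨N, h⟩) (g.1 ⟨N, h⟩) ∧
    ∀ (i : ℕ) (hi : i < b - a), N < i → f.1 ⟨i, hi⟩ = g.1 ⟨i, hi⟩

noncomputable def Telescope (ns : ℕ → ℕ) (hmono : StrictMono ns) (h0 : ns 0 = 0) : BDiagram where
  V l := B.V (ns l)
  E l := B.TelE (ns l) (ns (l + 1))
  fintV l := B.fintV (ns l)
  fintE l := by
    classical
    letI : ∀ i : Fin (ns (l + 1) - ns l), Fintype (B.E (ns l + i.val)) := fun i => B.fintE _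
    exact Subtype.fintype _
  nonV l := B.nonV (ns l)
  rootSubsingleton := by show Subsingleton (B.V (ns 0)); rw [h0]; exact B.rootSubsingleton
  src {l} f := B.telSrc (hmono (Nat.lt_succ_self l)) f
  tgt {l} f := B.telTgt (hmono (Nat.lt_succ_self l)) f
  hasOut := by
    intro l v
    refine ⟨⟨fun i => B.chainFrom (ns l) v i.val,
      fun i h => (B.chainFrom_src_succ (ns l) v i).symm⟩, ?_⟩
    exact B.chainFrom_src_zero (ns l) v
  hasIn := by
    intro l w
    have hab : ns l < ns (l + 1) := hmono (Nat.lt_succ_self l)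
    have hj : ns l + (ns (l + 1) - ns l - 1) + 1 = ns (l + 1) := by omega
    refine ⟨⟨fun i => B.chainTo (ns l) (ns (l + 1) - ns l - 1) (B.castV hj.symm w) i.val
        (by omega), fun i h => B.chainTo_chain _ _ _ i (by omega) (by omega)⟩, ?_⟩
    show B.castV (by omega) (B.tgt (B.chainTo (ns l) (ns (l + 1) - ns l - 1)
      (B.castV hj.symm w) (ns (l + 1) - ns l - 1) (by omega))) = w
    rw [B.chainTo_tgt_last]
    exact B.castV_eq_of_heq _ (B.castV_heq _ w)
  elt {l} f g := B.telLT f g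
  elt_tgt := by
    rintro l f g ⟨N, hN, hlt, hgt⟩
    show B.telTgt _ f = B.telTgt _ g
    unfold telTgt
    refine congrArg (B.castV _) ?_
    rcases eq_or_lt_of_le (show N ≤ ns (l + 1) - ns l - 1 by omega) with h | h
    · subst h
      exact B.elt_tgt _ _ _ hlt
    · exact congrArg B.tgt (hgt _ (by omega) h)
  elt_irrefl := by
    rintro l f ⟨N, h, hlt, -⟩
    exact B.elt_irrefl _ _ hlt
  elt_trans := by
    rintro l f g h ⟨N₁, hN₁, hlt₁, hgt₁⟩ ⟨N₂, hN₂, hlt₂, hgt₂⟩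
    rcases lt_trichotomy N₁ N₂ with hc | hc | hc
    · exact ⟨N₂, hN₂, by rw [hgt₁ N₂ hN₂ hc]; exact hlt₂,
        fun i hi hN => (hgt₁ i hi (by omega)).trans (hgt₂ i hi hN)⟩
    · subst hc
      exact ⟨N₁, hN₁, B.elt_trans _ _ _ _ hlt₁ hlt₂,
        fun i hi hN => (hgt₁ i hi hN).trans (hgt₂ i hi hN)⟩
    · refine ⟨N₁, hN₁, ?_, fun i hi hN => (hgt₁ i hi hN).trans (hgt₂ i hi (by omega))⟩
      rw [← hgt₂ N₁ hN₁ hc]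
      exact hlt₁
  elt_total := by
    intro l f g htgt hne
    classical
    have hab : ns l < ns (l + 1) := hmono (Nat.lt_succ_self l)
    set b := ns (l + 1) - ns l with hb
    have hex : ∃ N, ∃ h : N < b, f.1 ⟨N, h⟩ ≠ g.1 ⟨N, h⟩ := by
      by_contra hco
      push_neg at hco
      exact hne (Subtype.ext (funext fun i => hco i.val i.isLt))
    set P : ℕ → Prop := fun N => ∃ h : N < b, f.1 ⟨N, h⟩ ≠ g.1 ⟨N, h⟩ with hP
    obtain ⟨N₀, hN₀⟩ := hex
    set N := Nat.findGreatest P b with hNdef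
    have hPN : P N := Nat.findGreatest_spec (le_of_lt hN₀.choose) hN₀
    have hafter : ∀ i (hi : i < b), N < i → f.1 ⟨i, hi⟩ = g.1 ⟨i, hi⟩ := by
      intro i hi hNi
      by_contra hcon
      exact Nat.findGreatest_is_greatest hNi (le_of_lt hi) ⟨hi, hcon⟩
    clear_value N
    obtain ⟨hNb, hNne⟩ := hPN
    have htgtN : B.tgt (f.1 ⟨N, hNb⟩) = B.tgt (g.1 ⟨N, hNb⟩) := by
      rcases eq_or_lt_of_le (show N ≤ b - 1 by omega) with h | h
      · -- N is the last index; use equality of targets of the composite edges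
        subst h
        exact B.castV_inj _ htgt
      · have h2 : f.1 ⟨N + 1, by omega⟩ = g.1 ⟨N + 1, by omega⟩ :=
          hafter (N + 1) (by omega) (by omega)
        rw [f.2 N (by omega), g.2 N (by omega), h2]
    rcases B.elt_total _ _ _ htgtN hNne with h | h
    · exact Or.inl ⟨N, hNb, h, hafter⟩
    · exact Or.inr ⟨N, hNb, h, fun i hi hN => (hafter i hi hN).symm⟩

def teleMap (ns : ℕ → ℕ) (hmono : StrictMono ns) (h0 : ns 0 = 0) (x : B.PathSpace) :
    (B.Telescope ns hmono h0).PathSpace :=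
  ⟨fun l => ⟨fun i => x.1 (ns l + i.val), fun i _ => x.2 (ns l + i)⟩, fun l => by
    have hab : ns l < ns (l + 1) := hmono (Nat.lt_succ_self l)
    have hm : ns l + (ns (l + 1) - ns l - 1) + 1 = ns (l + 1) := by omega
    show B.castV _ (B.tgt (x.1 (ns l + (ns (l + 1) - ns l - 1)))) = B.src (x.1 (ns (l + 1) + 0))
    rw [x.2 (ns l + (ns (l + 1) - ns l - 1))]
    exact B.castV_eq_of_heq _ (by rw [hm]; exact HEq.rfl)⟩


/-- Level `n+1` is uniformly ordered: there is a single nonempty block `P` of paths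
from the root to level `n` such that the `n`-basic block at every vertex at level
`n+1` is a positive power of `P`. -/
def UniformlyOrderedLevel (n : ℕ) : Prop :=
  ∃ (p : ℕ) (hp : 0 < p) (P : Fin p → B.FinPath n),
    ∀ v : B.V (n + 1), ∃ (m : ℕ), 0 < m ∧
      ∃ enum : Fin (m * p) ≃ { q : B.FinPath (n + 1) // B.EndsAt q v },
        (∀ i j : Fin (m * p), i < j ↔ B.finLT (enum i).1 (enum j).1) ∧
        (∀ i : Fin (m * p),
          B.truncTo n (Nat.le_succ n) (enum i).1 = P ⟨i.val % p, Nat.mod_lt _ hp⟩)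

/-- The ordinal label of an edge: its position in the linear order on the edges
into its target. -/
noncomputable def edgeLabel {n : ℕ} (e : B.E n) : ℕ := Nat.card { e' : B.E n // B.elt e' e }

/-- Deterministic: for every `n ≥ 1`, distinct edges with the same source at level
`n` have different ordinal labels. -/
def Deterministic : Prop :=
  ∀ n : ℕ, 1 ≤ n → ∀ e f : B.E n, B.src e = B.src f → e ≠ f →
    B.edgeLabel e ≠ B.edgeLabel f

end BDiagram

/-- A Bratteli–Vershik system: a simple, properly ordered ordered Bratteli diagram
together with its Vershik map. -/
structure BVSystem where
  B : BDiagram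
  T : B.PathSpace ≃ B.PathSpace
  proper : B.ProperlyOrdered
  simple : B.Simple
  vershik : B.IsVershik T

/-- Conjugacy of systems: an equivariant homeomorphism of the path spaces taking
minimal paths to minimal paths. -/
def Conjugate (S S' : BVSystem) : Prop :=
  ∃ φ : S.B.PathSpace ≃ S'.B.PathSpace,
    (@Continuous _ _ S.B.pathTop S'.B.pathTop φ) ∧
    (@Continuous _ _ S'.B.pathTop S.B.pathTop φ.symm) ∧
    (∀ x, φ (S.T x) = S'.T (φ x)) ∧
    (∀ x, S.B.IsMinPath x → S'.B.IsMinPath (φ x))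

/-- An odometer: a system whose diagram has exactly one vertex at every level. -/
def IsOdometer (S : BVSystem) : Prop := ∀ n, Subsingleton (S.B.V n)


namespace BDiagram

variable (B : BDiagram)

theorem finLT_asymm {n : ℕ} {p q : B.FinPath n} (h1 : B.finLT p q) (h2 : B.finLT q p) :
    False := by
  obtain ⟨N1, hN1, he1, hg1⟩ := h1
  obtain ⟨N2, hN2, he2, hg2⟩ := h2
  rcases lt_trichotomy N1 N2 with hc | hc | hc
  · rw [hg1 N2 hN2 hc] at he2
    exact B.elt_irrefl _ _ he2
  · subst hc
    exact B.elt_irrefl _ _ (B.elt_trans _ _ _ _ he1 he2)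
  · rw [hg2 N1 hN1 hc] at he1
    exact B.elt_irrefl _ _ he1

theorem finLT_total {n : ℕ} {v : B.V n} {p q : B.FinPath n}
    (hp : B.EndsAt p v) (hq : B.EndsAt q v) (hne : p ≠ q) :
    B.finLT p q ∨ B.finLT q p := by
  classical
  have hex : ∃ N, ∃ h : N < n, p.1 ⟨N, h⟩ ≠ q.1 ⟨N, h⟩ := by
    by_contra hco
    push_neg at hco
    exact hne (Subtype.ext (funext fun i => hco i.val i.isLt))
  set P : ℕ → Prop := fun N => ∃ h : N < n, p.1 ⟨N, h⟩ ≠ q.1 ⟨N, h⟩ with hP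
  obtain ⟨N₀, hN₀⟩ := hex
  have hPN : P (Nat.findGreatest P n) := Nat.findGreatest_spec (le_of_lt hN₀.choose) hN₀
  have hafter : ∀ i (hi : i < n), Nat.findGreatest P n < i → p.1 ⟨i, hi⟩ = q.1 ⟨i, hi⟩ := by
    intro i hi hNi
    by_contra hcon
    exact Nat.findGreatest_is_greatest hNi (le_of_lt hi) ⟨hi, hcon⟩
  obtain ⟨hNb, hNne⟩ := hPN
  have htgtN : B.tgt (p.1 ⟨Nat.findGreatest P n, hNb⟩) = B.tgt (q.1 ⟨Nat.findGreatest P n, hNb⟩) := by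
    rcases eq_or_lt_of_le (show Nat.findGreatest P n + 1 ≤ n from hNb) with h | h
    · have h1 := hp (Nat.findGreatest P n) h.symm
      have h2 := hq (Nat.findGreatest P n) h.symm
      exact h1.trans h2.symm
    · rw [p.2 (Nat.findGreatest P n) h, q.2 (Nat.findGreatest P n) h,
        hafter (Nat.findGreatest P n + 1) h (by omega)]
  rcases B.elt_total _ _ _ htgtN hNne with h | h
  · exact Or.inl ⟨Nat.findGreatest P n, hNb, h, hafter⟩
  · exact Or.inr ⟨Nat.findGreatest P n, hNb, h, fun i hi hN => (hafter i hi hN).symm⟩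

/-- A chain of edges from the root down to a given vertex. -/
noncomputable def rchain : ∀ (n : ℕ), B.V n → ∀ (i : ℕ), i < n → B.E i
  | 0, _, i, h => absurd h (Nat.not_lt_zero i)
  | n + 1, v, i, _ =>
      if hi : i < n then rchain n (B.src (B.hasIn n v).choose) i hi
      else B.castE (by omega : n = i) (B.hasIn n v).choose

theorem rchain_tgt (n : ℕ) (v : B.V n) (i : ℕ) (h : i < n) (he : n = i + 1) :
    B.tgt (B.rchain n v i h) = B.castV he v := by
  subst he
  simp only [rchain]
  rw [dif_neg (lt_irrefl i)]
  exact (B.hasIn i v).choose_spec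

theorem rchain_chain : ∀ (n : ℕ) (v : B.V n) (i : ℕ) (h1 : i + 1 < n) (h0 : i < n),
    B.tgt (B.rchain n v i h0) = B.src (B.rchain n v (i + 1) h1) := by
  intro n
  induction n with
  | zero => intro v i h1 h0; omega
  | succ m ih =>
    intro v i h1 h0
    by_cases hc : i + 1 < m
    · simp only [rchain]
      rw [dif_pos (by omega : i < m), dif_pos hc]
      exact ih _ i hc (by omega)
    · have hm : m = i + 1 := by omega
      subst hm
      simp only [rchain]
      rw [dif_pos (by omega : i < i + 1), dif_neg (lt_irrefl (i + 1)), dif_neg (lt_irrefl i)]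
      exact (B.hasIn i _).choose_spec

/-- Replace edge `i` of `x'` by an edge `e` with the same target, and the part below
level `i` by an arbitrary chain from the root. -/
noncomputable def replPath (x' : B.PathSpace) {i : ℕ} (e : B.E i) (n : ℕ) (hin : i < n)
    (hte : B.tgt e = B.tgt (x'.1 i)) : B.FinPath n :=
  ⟨fun j => if hj : j.val < i then B.rchain i (B.src e) j.val hj
            else if hj2 : j.val = i then B.castE hj2.symm e else x'.1 j.val, by
    intro j hj
    beta_reduce
    by_cases h1 : j + 1 < i
    · rw [dif_pos (by omega : j < i), dif_pos h1]
      exact B.rchain_chain i _ j h1 _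
    · by_cases h2 : j + 1 = i
      · rw [dif_pos (by omega : j < i), dif_neg (by omega : ¬ j + 1 < i), dif_pos h2]
        rw [B.rchain_tgt i (B.src e) j (by omega) h2.symm]
        subst h2
        rfl
      · by_cases h3 : j = i
        · rw [dif_neg (by omega : ¬ j < i), dif_pos h3,
            dif_neg (by omega : ¬ j + 1 < i), dif_neg (by omega : ¬ j + 1 = i)]
          subst h3
          rw [show B.tgt (B.castE (rfl : j = j).symm e) = B.tgt e from rfl, hte]
          exact x'.2 j
        · rw [dif_neg (by omega : ¬ j < i), dif_neg h3,
            dif_neg (by omega : ¬ j + 1 < i), dif_neg (by omega : ¬ j + 1 = i)]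
          exact x'.2 j⟩

theorem replPath_val_at (x' : B.PathSpace) {i : ℕ} (e : B.E i) (n : ℕ) (hin : i < n)
    (hte : B.tgt e = B.tgt (x'.1 i)) :
    (B.replPath x' e n hin hte).1 ⟨i, hin⟩ = e := by
  show (if hj : i < i then B.rchain i (B.src e) i hj
    else if hj2 : i = i then B.castE hj2.symm e else x'.1 i) = e
  rw [dif_neg (lt_irrefl i), dif_pos rfl]
  rfl

theorem replPath_val_gt (x' : B.PathSpace) {i : ℕ} (e : B.E i) (n : ℕ) (hin : i < n)
    (hte : B.tgt e = B.tgt (x'.1 i)) (j : ℕ) (hj : j < n) (hij : i < j) :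
    (B.replPath x' e n hin hte).1 ⟨j, hj⟩ = x'.1 j := by
  show (if hj : j < i then B.rchain i (B.src e) j hj
    else if hj2 : j = i then B.castE hj2.symm e else x'.1 j) = x'.1 j
  rw [dif_neg (by omega : ¬ j < i), dif_neg (by omega : ¬ j = i)]

theorem replPath_endsAt (x' : B.PathSpace) {i : ℕ} (e : B.E i) (n : ℕ) (hin : i < n)
    (hte : B.tgt e = B.tgt (x'.1 i)) :
    B.EndsAt (B.replPath x' e n hin hte) (B.pathVert x' n) := by
  intro m h
  subst h
  by_cases h3 : m = i
  · subst h3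
    show B.tgt (if hj : m < m then B.rchain m (B.src e) m hj
      else if hj2 : m = m then B.castE hj2.symm e else x'.1 m) = _
    rw [dif_neg (lt_irrefl m), dif_pos rfl]
    show B.tgt e = _
    rw [hte]
    exact x'.2 m
  · show B.tgt (if hj : m < i then B.rchain i (B.src e) m hj
      else if hj2 : m = i then B.castE hj2.symm e else x'.1 m) = _
    rw [dif_neg (by omega : ¬ m < i), dif_neg h3]
    exact x'.2 m

/-- Extend a finite path ending at the level-`n` vertex of `x` by the tail of `x`. -/
def extPath (x : B.PathSpace) (n : ℕ) (q : B.FinPath n) (hq : B.EndsAt q (B.pathVert x n)) :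
    B.PathSpace :=
  ⟨fun j => if hj : j < n then q.1 ⟨j, hj⟩ else x.1 j, by
    intro j
    beta_reduce
    by_cases h1 : j + 1 < n
    · rw [dif_pos (by omega : j < n), dif_pos h1]
      exact q.2 j h1
    · by_cases h2 : j < n
      · have hn : n = j + 1 := by omega
        rw [dif_pos h2, dif_neg h1]
        have hh := hq j hn
        subst hn
        exact hh
      · rw [dif_neg h2, dif_neg h1]
        exact x.2 j⟩

theorem extPath_eq (x y : B.PathSpace) (n : ℕ) (hy : ∀ j, n ≤ j → y.1 j = x.1 j)
    (hq : B.EndsAt (B.pathInit y n) (B.pathVert x n)) :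
    B.extPath x n (B.pathInit y n) hq = y := by
  apply Subtype.ext
  funext j
  show (if hj : j < n then y.1 j else x.1 j) = y.1 j
  by_cases h : j < n
  · rw [dif_pos h]
  · rw [dif_neg h]
    exact (hy j (by omega)).symm

theorem extPath_lt (x : B.PathSpace) (n : ℕ) (p q : B.FinPath n)
    (hp : B.EndsAt p (B.pathVert x n)) (hq : B.EndsAt q (B.pathVert x n))
    (h : B.finLT p q) : B.pathLT (B.extPath x n p hp) (B.extPath x n q hq) := by
  obtain ⟨N, hN, he, hg⟩ := h
  refine ⟨N, ?_, ?_⟩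
  · show B.elt (if hj : N < n then p.1 ⟨N, hj⟩ else x.1 N) (if hj : N < n then q.1 ⟨N, hj⟩ else x.1 N)
    rw [dif_pos hN, dif_pos hN]
    exact he
  · intro j hj
    show (if h2 : j < n then p.1 ⟨j, h2⟩ else x.1 j) = (if h2 : j < n then q.1 ⟨j, h2⟩ else x.1 j)
    by_cases h2 : j < n
    · rw [dif_pos h2, dif_pos h2]
      exact hg j h2 hj
    · rw [dif_neg h2, dif_neg h2]

/-- Transport the successor relation through an order isomorphism. -/
theorem succ_transfer {n : ℕ} {v v' : B.V n}
    (φ : {p : B.FinPath n // B.EndsAt p v} ≃ {p : B.FinPath n // B.EndsAt p v'})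
    (hφ : ∀ p q, B.finLT p.1 q.1 ↔ B.finLT (φ p).1 (φ q).1)
    (a s : {p : B.FinPath n // B.EndsAt p v}) (b t : {p : B.FinPath n // B.EndsAt p v'})
    (hab : φ a = b)
    (h1 : B.finLT a.1 s.1)
    (h2 : ∀ c : {p : B.FinPath n // B.EndsAt p v}, B.finLT a.1 c.1 → ¬ B.finLT c.1 s.1)
    (h3 : B.finLT b.1 t.1)
    (h4 : ∀ c : {p : B.FinPath n // B.EndsAt p v'}, B.finLT b.1 c.1 → ¬ B.finLT c.1 t.1) :
    φ s = t := by
  by_contra hne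
  have hne' : (φ s).1 ≠ t.1 := fun hh => hne (Subtype.ext hh)
  have hbs : B.finLT b.1 (φ s).1 := by
    rw [← hab]
    exact (hφ a s).mp h1
  rcases B.finLT_total (φ s).2 t.2 hne' with hcase | hcase
  · exact h4 (φ s) hbs hcase
  · have h5 : B.finLT a.1 (φ.symm t).1 := by
      apply (hφ a (φ.symm t)).mpr
      rw [hab, Equiv.apply_symm_apply]
      exact h3
    have h6 : B.finLT (φ.symm t).1 s.1 := by
      apply (hφ (φ.symm t) s).mpr
      rw [Equiv.apply_symm_apply]
      exact hcase
    exact h2 (φ.symm t) h5 h6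

/-- Transport the predecessor relation through an order isomorphism. -/
theorem pred_transfer {n : ℕ} {v v' : B.V n}
    (φ : {p : B.FinPath n // B.EndsAt p v} ≃ {p : B.FinPath n // B.EndsAt p v'})
    (hφ : ∀ p q, B.finLT p.1 q.1 ↔ B.finLT (φ p).1 (φ q).1)
    (a s : {p : B.FinPath n // B.EndsAt p v}) (b t : {p : B.FinPath n // B.EndsAt p v'})
    (hab : φ a = b)
    (h1 : B.finLT s.1 a.1)
    (h2 : ∀ c : {p : B.FinPath n // B.EndsAt p v}, B.finLT s.1 c.1 → ¬ B.finLT c.1 a.1)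
    (h3 : B.finLT t.1 b.1)
    (h4 : ∀ c : {p : B.FinPath n // B.EndsAt p v'}, B.finLT t.1 c.1 → ¬ B.finLT c.1 b.1) :
    φ s = t := by
  by_contra hne
  have hne' : (φ s).1 ≠ t.1 := fun hh => hne (Subtype.ext hh)
  have hsb : B.finLT (φ s).1 b.1 := by
    rw [← hab]
    exact (hφ s a).mp h1
  rcases B.finLT_total (φ s).2 t.2 hne' with hcase | hcase
  · have h5 : B.finLT s.1 (φ.symm t).1 := by
      apply (hφ s (φ.symm t)).mpr
      rw [Equiv.apply_symm_apply]
      exact hcase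
    have h6 : B.finLT (φ.symm t).1 a.1 := by
      apply (hφ (φ.symm t) a).mpr
      rw [hab, Equiv.apply_symm_apply]
      exact h3
    exact h2 (φ.symm t) h5 h6
  · exact h4 (φ s) hcase hsb

/-- Reindexing of the ends-at subtype along equality of vertices. -/
def endsEquiv {n : ℕ} {v w : B.V n} (h : v = w) :
    {p : B.FinPath n // B.EndsAt p v} ≃ {p : B.FinPath n // B.EndsAt p w} :=
  ⟨fun a => ⟨a.1, h ▸ a.2⟩, fun a => ⟨a.1, h.symm ▸ a.2⟩, fun _ => rfl, fun _ => rfl⟩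

/-- The key invariant: eventual `k`-equivalence at all high levels. -/
def Weak (k : ℕ) (x x' : B.PathSpace) : Prop :=
  ∃ M : ℕ, k < M ∧ ∀ n : ℕ, M ≤ n → B.KEquivAt k n x x'

theorem weak_refl (k : ℕ) (x : B.PathSpace) : B.Weak k x x :=
  ⟨k + 1, Nat.lt_succ_self k, fun _ _ =>
    ⟨Equiv.refl _, fun _ _ => Iff.rfl, fun _ _ _ _ => rfl, rfl⟩⟩

theorem weak_symm {k : ℕ} {x x' : B.PathSpace} (h : B.Weak k x x') : B.Weak k x' x := by
  obtain ⟨M, hkM, hM⟩ := h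
  refine ⟨M, hkM, fun n hn => ?_⟩
  obtain ⟨φ, h1, h2, h3⟩ := hM n hn
  refine ⟨φ.symm, fun p q => ?_, fun p i hik hin => ?_, ?_⟩
  · have hh := h1 (φ.symm p) (φ.symm q)
    rw [Equiv.apply_symm_apply, Equiv.apply_symm_apply] at hh
    exact hh.symm
  · have hh := h2 (φ.symm p) i hik hin
    rw [Equiv.apply_symm_apply] at hh
    exact hh.symm
  · rw [Equiv.symm_apply_eq]
    exact h3.symm

theorem weak_agree {k : ℕ} {x x' : B.PathSpace} (h : B.Weak k x x') :
    ∀ i, i < k → x.1 i = x'.1 i := by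
  obtain ⟨M, hkM, hM⟩ := h
  intro i hik
  obtain ⟨φ, h1, h2, h3⟩ := hM M le_rfl
  have hin : i < M := lt_trans hik hkM
  have hh := h2 ⟨B.pathInit x M, B.pathInit_endsAt x M⟩ i hik hin
  rw [h3] at hh
  exact hh.symm

theorem weak_max {k : ℕ} {x x' : B.PathSpace} (h : B.Weak k x x') (hmax : B.IsMaxPath x) :
    B.IsMaxPath x' := by
  obtain ⟨M, hkM, hM⟩ := h
  intro i e' hcon
  set n := max M (i + 1) with hn
  obtain ⟨φ, hφ1, hφ2, hφ3⟩ := hM n (by omega)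
  have hin : i < n := by omega
  have hgreat : ∀ c : {p : B.FinPath n // B.EndsAt p (B.pathVert x n)},
      c.1 ≠ B.pathInit x n → B.finLT c.1 (B.pathInit x n) := by
    intro c hne
    rcases B.finLT_total c.2 (B.pathInit_endsAt x n) hne with hcase | hcase
    · exact hcase
    · obtain ⟨N, hN, he, -⟩ := hcase
      exact absurd he (hmax N _)
  have hgreat' : ∀ c : {p : B.FinPath n // B.EndsAt p (B.pathVert x' n)},
      c.1 ≠ B.pathInit x' n → B.finLT c.1 (B.pathInit x' n) := by
    intro c hne
    have h0 : (φ.symm c).1 ≠ B.pathInit x n := by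
      intro hh
      apply hne
      have h2 := congrArg φ (Subtype.ext hh :
        φ.symm c = ⟨B.pathInit x n, B.pathInit_endsAt x n⟩)
      rw [Equiv.apply_symm_apply, hφ3] at h2
      exact congrArg Subtype.val h2
    have h1 := hgreat (φ.symm c) h0
    have h2 := (hφ1 (φ.symm c) ⟨B.pathInit x n, B.pathInit_endsAt x n⟩).mp h1
    rw [Equiv.apply_symm_apply, hφ3] at h2
    exact h2
  have hte : B.tgt e' = B.tgt (x'.1 i) := (B.elt_tgt i _ _ hcon).symm
  have hq1 : B.finLT (B.pathInit x' n) (B.replPath x' e' n hin hte) :=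
    ⟨i, hin, by rw [B.replPath_val_at]; exact hcon,
      fun j hj hij => (B.replPath_val_gt x' e' n hin hte j hj hij).symm⟩
  by_cases heq : (B.replPath x' e' n hin hte) = B.pathInit x' n
  · rw [heq] at hq1
    exact B.finLT_asymm hq1 hq1
  · exact B.finLT_asymm hq1 (hgreat' ⟨_, B.replPath_endsAt x' e' n hin hte⟩ heq)

theorem weak_min {k : ℕ} {x x' : B.PathSpace} (h : B.Weak k x x') (hmin : B.IsMinPath x) :
    B.IsMinPath x' := by
  obtain ⟨M, hkM, hM⟩ := h
  intro i e' hcon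
  set n := max M (i + 1) with hn
  obtain ⟨φ, hφ1, hφ2, hφ3⟩ := hM n (by omega)
  have hin : i < n := by omega
  have hleast : ∀ c : {p : B.FinPath n // B.EndsAt p (B.pathVert x n)},
      c.1 ≠ B.pathInit x n → B.finLT (B.pathInit x n) c.1 := by
    intro c hne
    rcases B.finLT_total c.2 (B.pathInit_endsAt x n) hne with hcase | hcase
    · obtain ⟨N, hN, he, -⟩ := hcase
      exact absurd he (hmin N _)
    · exact hcase
  have hleast' : ∀ c : {p : B.FinPath n // B.EndsAt p (B.pathVert x' n)},
      c.1 ≠ B.pathInit x' n → B.finLT (B.pathInit x' n) c.1 := by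
    intro c hne
    have h0 : (φ.symm c).1 ≠ B.pathInit x n := by
      intro hh
      apply hne
      have h2 := congrArg φ (Subtype.ext hh :
        φ.symm c = ⟨B.pathInit x n, B.pathInit_endsAt x n⟩)
      rw [Equiv.apply_symm_apply, hφ3] at h2
      exact congrArg Subtype.val h2
    have h1 := hleast (φ.symm c) h0
    have h2 := (hφ1 ⟨B.pathInit x n, B.pathInit_endsAt x n⟩ (φ.symm c)).mp h1
    rw [Equiv.apply_symm_apply, hφ3] at h2
    exact h2
  have hte : B.tgt e' = B.tgt (x'.1 i) := B.elt_tgt i _ _ hcon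
  have hq1 : B.finLT (B.replPath x' e' n hin hte) (B.pathInit x' n) :=
    ⟨i, hin, by rw [B.replPath_val_at]; exact hcon,
      fun j hj hij => B.replPath_val_gt x' e' n hin hte j hj hij⟩
  by_cases heq : (B.replPath x' e' n hin hte) = B.pathInit x' n
  · rw [heq] at hq1
    exact B.finLT_asymm hq1 hq1
  · exact B.finLT_asymm hq1 (hleast' ⟨_, B.replPath_endsAt x' e' n hin hte⟩ heq)

theorem weak_T {T : B.PathSpace ≃ B.PathSpace} (hproper : B.ProperlyOrdered)
    (hT : B.IsVershik T) {k : ℕ} {x x' : B.PathSpace} (h : B.Weak k x x') :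
    B.Weak k (T x) (T x') := by
  by_cases hmax : B.IsMaxPath x
  · have hmax' : B.IsMaxPath x' := B.weak_max h hmax
    obtain ⟨z, hz, hu⟩ := hproper.2
    have hxx : x = x' := (hu x hmax).trans (hu x' hmax').symm
    rw [hxx]
    exact B.weak_refl k (T x')
  · have hmax' : ¬ B.IsMaxPath x' := fun hh => hmax (B.weak_max (B.weak_symm h) hh)
    obtain ⟨hlt, hmin⟩ := hT.1 x hmax
    obtain ⟨hlt', hmin'⟩ := hT.1 x' hmax'
    obtain ⟨N, heN, hgN⟩ := hlt
    obtain ⟨N', heN', hgN'⟩ := hlt'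
    obtain ⟨M, hkM, hM⟩ := h
    refine ⟨M + N + N' + 1, by omega, fun n hn => ?_⟩
    obtain ⟨φ, hφ1, hφ2, hφ3⟩ := hM n (by omega)
    have hNn : N < n := by omega
    have hN'n : N' < n := by omega
    have hv : B.pathVert (T x) n = B.pathVert x n := by
      show B.src ((T x).1 n) = B.src (x.1 n)
      rw [← hgN n hNn]
    have hv' : B.pathVert (T x') n = B.pathVert x' n := by
      show B.src ((T x').1 n) = B.src (x'.1 n)
      rw [← hgN' n hN'n]
    have hsEnd : B.EndsAt (B.pathInit (T x) n) (B.pathVert x n) :=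
      hv ▸ B.pathInit_endsAt (T x) n
    have htEnd : B.EndsAt (B.pathInit (T x') n) (B.pathVert x' n) :=
      hv' ▸ B.pathInit_endsAt (T x') n
    have hxe : B.extPath x n (B.pathInit x n) (B.pathInit_endsAt x n) = x :=
      B.extPath_eq x x n (fun _ _ => rfl) _
    have hTxe : B.extPath x n (B.pathInit (T x) n) hsEnd = T x :=
      B.extPath_eq x (T x) n (fun j hj => (hgN j (by omega)).symm) hsEnd
    have hx'e : B.extPath x' n (B.pathInit x' n) (B.pathInit_endsAt x' n) = x' :=
      B.extPath_eq x' x' n (fun _ _ => rfl) _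
    have hTx'e : B.extPath x' n (B.pathInit (T x') n) htEnd = T x' :=
      B.extPath_eq x' (T x') n (fun j hj => (hgN' j (by omega)).symm) htEnd
    have hAS : B.finLT (B.pathInit x n) (B.pathInit (T x) n) :=
      ⟨N, hNn, heN, fun j hj hNj => hgN j hNj⟩
    have hAS' : B.finLT (B.pathInit x' n) (B.pathInit (T x') n) :=
      ⟨N', hN'n, heN', fun j hj hNj => hgN' j hNj⟩
    have hASmin : ∀ c : {p : B.FinPath n // B.EndsAt p (B.pathVert x n)},
        B.finLT (B.pathInit x n) c.1 → ¬ B.finLT c.1 (B.pathInit (T x) n) := by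
      intro c h1 h2
      have p1 := B.extPath_lt x n (B.pathInit x n) c.1 (B.pathInit_endsAt x n) c.2 h1
      rw [hxe] at p1
      have p2 := B.extPath_lt x n c.1 (B.pathInit (T x) n) c.2 hsEnd h2
      rw [hTxe] at p2
      exact hmin _ p1 p2
    have hASmin' : ∀ c : {p : B.FinPath n // B.EndsAt p (B.pathVert x' n)},
        B.finLT (B.pathInit x' n) c.1 → ¬ B.finLT c.1 (B.pathInit (T x') n) := by
      intro c h1 h2
      have p1 := B.extPath_lt x' n (B.pathInit x' n) c.1 (B.pathInit_endsAt x' n) c.2 h1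
      rw [hx'e] at p1
      have p2 := B.extPath_lt x' n c.1 (B.pathInit (T x') n) c.2 htEnd h2
      rw [hTx'e] at p2
      exact hmin' _ p1 p2
    have hst : φ ⟨B.pathInit (T x) n, hsEnd⟩ = ⟨B.pathInit (T x') n, htEnd⟩ :=
      B.succ_transfer φ hφ1 ⟨B.pathInit x n, B.pathInit_endsAt x n⟩
        ⟨B.pathInit (T x) n, hsEnd⟩ ⟨B.pathInit x' n, B.pathInit_endsAt x' n⟩
        ⟨B.pathInit (T x') n, htEnd⟩ hφ3 hAS hASmin hAS' hASmin'
    refine ⟨(B.endsEquiv hv).trans (φ.trans (B.endsEquiv hv'.symm)),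
      fun p q => hφ1 (B.endsEquiv hv p) (B.endsEquiv hv q),
      fun p i hik hin => hφ2 (B.endsEquiv hv p) i hik hin, ?_⟩
    refine Subtype.ext ?_
    show (φ ⟨B.pathInit (T x) n, hsEnd⟩).1 = B.pathInit (T x') n
    rw [hst]

theorem weak_Tsymm {T : B.PathSpace ≃ B.PathSpace} (hproper : B.ProperlyOrdered)
    (hT : B.IsVershik T) {k : ℕ} {x x' : B.PathSpace} (h : B.Weak k x x') :
    B.Weak k (T.symm x) (T.symm x') := by
  by_cases hmin : B.IsMinPath x
  · have hmin' : B.IsMinPath x' := B.weak_min h hmin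
    obtain ⟨z, hz, hu⟩ := hproper.1
    have hxx : x = x' := (hu x hmin).trans (hu x' hmin').symm
    rw [hxx]
    exact B.weak_refl k (T.symm x')
  · have hmin' : ¬ B.IsMinPath x' := fun hh => hmin (B.weak_min (B.weak_symm h) hh)
    have hymax : ¬ B.IsMaxPath (T.symm x) := by
      intro hh
      have hmm := hT.2 _ hh
      rw [Equiv.apply_symm_apply] at hmm
      exact hmin hmm
    have hymax' : ¬ B.IsMaxPath (T.symm x') := by
      intro hh
      have hmm := hT.2 _ hh
      rw [Equiv.apply_symm_apply] at hmm
      exact hmin' hmm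
    obtain ⟨hlt, hminimal⟩ := hT.1 _ hymax
    obtain ⟨hlt', hminimal'⟩ := hT.1 _ hymax'
    rw [Equiv.apply_symm_apply] at hlt hminimal
    rw [Equiv.apply_symm_apply] at hlt' hminimal'
    obtain ⟨N, heN, hgN⟩ := hlt
    obtain ⟨N', heN', hgN'⟩ := hlt'
    obtain ⟨M, hkM, hM⟩ := h
    refine ⟨M + N + N' + 1, by omega, fun n hn => ?_⟩
    obtain ⟨φ, hφ1, hφ2, hφ3⟩ := hM n (by omega)
    have hNn : N < n := by omega
    have hN'n : N' < n := by omega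
    have hv : B.pathVert (T.symm x) n = B.pathVert x n := by
      show B.src ((T.symm x).1 n) = B.src (x.1 n)
      rw [hgN n hNn]
    have hv' : B.pathVert (T.symm x') n = B.pathVert x' n := by
      show B.src ((T.symm x').1 n) = B.src (x'.1 n)
      rw [hgN' n hN'n]
    have hsEnd : B.EndsAt (B.pathInit (T.symm x) n) (B.pathVert x n) :=
      hv ▸ B.pathInit_endsAt (T.symm x) n
    have htEnd : B.EndsAt (B.pathInit (T.symm x') n) (B.pathVert x' n) :=
      hv' ▸ B.pathInit_endsAt (T.symm x') n
    have hxe : B.extPath x n (B.pathInit x n) (B.pathInit_endsAt x n) = x :=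
      B.extPath_eq x x n (fun _ _ => rfl) _
    have hye : B.extPath x n (B.pathInit (T.symm x) n) hsEnd = T.symm x :=
      B.extPath_eq x (T.symm x) n (fun j hj => hgN j (by omega)) hsEnd
    have hx'e : B.extPath x' n (B.pathInit x' n) (B.pathInit_endsAt x' n) = x' :=
      B.extPath_eq x' x' n (fun _ _ => rfl) _
    have hy'e : B.extPath x' n (B.pathInit (T.symm x') n) htEnd = T.symm x' :=
      B.extPath_eq x' (T.symm x') n (fun j hj => hgN' j (by omega)) htEnd
    have hSA : B.finLT (B.pathInit (T.symm x) n) (B.pathInit x n) :=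
      ⟨N, hNn, heN, fun j hj hNj => hgN j hNj⟩
    have hSA' : B.finLT (B.pathInit (T.symm x') n) (B.pathInit x' n) :=
      ⟨N', hN'n, heN', fun j hj hNj => hgN' j hNj⟩
    have hSAmin : ∀ c : {p : B.FinPath n // B.EndsAt p (B.pathVert x n)},
        B.finLT (B.pathInit (T.symm x) n) c.1 → ¬ B.finLT c.1 (B.pathInit x n) := by
      intro c h1 h2
      have p1 := B.extPath_lt x n (B.pathInit (T.symm x) n) c.1 hsEnd c.2 h1
      rw [hye] at p1
      have p2 := B.extPath_lt x n c.1 (B.pathInit x n) c.2 (B.pathInit_endsAt x n) h2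
      rw [hxe] at p2
      exact hminimal _ p1 p2
    have hSAmin' : ∀ c : {p : B.FinPath n // B.EndsAt p (B.pathVert x' n)},
        B.finLT (B.pathInit (T.symm x') n) c.1 → ¬ B.finLT c.1 (B.pathInit x' n) := by
      intro c h1 h2
      have p1 := B.extPath_lt x' n (B.pathInit (T.symm x') n) c.1 htEnd c.2 h1
      rw [hy'e] at p1
      have p2 := B.extPath_lt x' n c.1 (B.pathInit x' n) c.2 (B.pathInit_endsAt x' n) h2
      rw [hx'e] at p2
      exact hminimal' _ p1 p2
    have hst : φ ⟨B.pathInit (T.symm x) n, hsEnd⟩ = ⟨B.pathInit (T.symm x') n, htEnd⟩ :=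
      B.pred_transfer φ hφ1 ⟨B.pathInit x n, B.pathInit_endsAt x n⟩
        ⟨B.pathInit (T.symm x) n, hsEnd⟩ ⟨B.pathInit x' n, B.pathInit_endsAt x' n⟩
        ⟨B.pathInit (T.symm x') n, htEnd⟩ hφ3 hSA hSAmin hSA' hSAmin'
    refine ⟨(B.endsEquiv hv).trans (φ.trans (B.endsEquiv hv'.symm)),
      fun p q => hφ1 (B.endsEquiv hv p) (B.endsEquiv hv q),
      fun p i hik hin => hφ2 (B.endsEquiv hv p) i hik hin, ?_⟩
    refine Subtype.ext ?_
    show (φ ⟨B.pathInit (T.symm x) n, hsEnd⟩).1 = B.pathInit (T.symm x') n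
    rw [hst]

end BDiagram

/-- Every standard nonexpansive simple, properly ordered
Bratteli–Vershik system is nonexpansive. -/
theorem sne_implies_nonexpansive
    (B : BDiagram) (T : B.PathSpace ≃ B.PathSpace)
    (hproper : B.ProperlyOrdered) (hsimple : B.Simple) (hT : B.IsVershik T)
    (hsne : B.SNE) :
    B.Nonexpansive T := by
  intro k hk
  obtain ⟨x, x', hne, hkeq⟩ := hsne k hk
  refine ⟨x, x', hne, ?_⟩
  have base : B.Weak k x x' := ⟨k + 1, Nat.lt_succ_self k, fun n hn => hkeq.2 n (by omega)⟩
  have hall : ∀ m : ℤ, B.Weak k ((B.iterZ T m) x) ((B.iterZ T m) x') := by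
    intro m
    induction m using Int.induction_on with
    | zero => exact base
    | succ m ih =>
        have e1 : ∀ y : B.PathSpace, (B.iterZ T ((m : ℤ) + 1)) y = T ((B.iterZ T m) y) := by
          intro y
          show ((T : Equiv.Perm B.PathSpace) ^ ((m : ℤ) + 1)) y =
            T (((T : Equiv.Perm B.PathSpace) ^ (m : ℤ)) y)
          rw [show (m : ℤ) + 1 = 1 + m from by ring, zpow_add, zpow_one]
          rfl
        rw [e1, e1]
        exact B.weak_T hproper hT ih
    | pred m ih =>
        have e1 : ∀ y : B.PathSpace, (B.iterZ T (-(m : ℤ) - 1)) y = T.symm ((B.iterZ T (-m)) y) := by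
          intro y
          show ((T : Equiv.Perm B.PathSpace) ^ (-(m : ℤ) - 1)) y =
            T.symm (((T : Equiv.Perm B.PathSpace) ^ (-m : ℤ)) y)
          rw [show -(m : ℤ) - 1 = -1 + -m from by ring, zpow_add, zpow_neg_one]
          rfl
        rw [e1, e1]
        exact B.weak_Tsymm hproper hT ih
  intro m i hik
  exact B.weak_agree (hall m) i hik
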